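/- Let (X_i) be a centered Gaussian vector with positive definite covariance Γ, partitioned into components X_A and X_M. For any vector u supported on M, letting Y = u^T X_M and P_A Y the orthogonal (L²) projection of Y onto the span of (X_i)_{i∈A}, the mean squared prediction error satisfies E[(P_A Y − Y)²] = u^T (Λ_M)^{-1} u where Λ = Γ^{-1}. -/

import Mathlib

open Matrix MeasureTheory

private lemma quad_form_integral {Ω : Type*} [MeasurableSpace Ω] (ℙ : Measure Ω)
    {ι : Type*} [Fintype ι]
    (X : ι → Ω → ℝ)
    (hint : ∀ i j, Integrable (fun ω => X i ω * X j ω) ℙ)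
    (Γ : Matrix ι ι ℝ)
    (hcov : ∀ i j, ∫ ω, X i ω * X j ω ∂ℙ = Γ i j)
    (c : ι → ℝ) :
    ∫ ω, (∑ k, c k * X k ω) ^ 2 ∂ℙ = c ⬝ᵥ (Γ *ᵥ c) := by
  have hpt : ∀ ω, (∑ k, c k * X k ω) ^ 2
      = ∑ k, ∑ l, c k * c l * (X k ω * X l ω) := by
    intro ω
    rw [sq, Finset.sum_mul_sum]
    exact Finset.sum_congr rfl fun k _ => Finset.sum_congr rfl fun l _ => by ring
  simp_rw [hpt]
  rw [integral_finset_sum]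
  · have h1 : ∀ k ∈ Finset.univ, (∫ ω, ∑ l, c k * c l * (X k ω * X l ω) ∂ℙ)
        = ∑ l, c k * c l * Γ k l := by
      intro k _
      rw [integral_finset_sum]
      · exact Finset.sum_congr rfl fun l _ => by
          rw [integral_const_mul, hcov]
      · exact fun l _ => (hint k l).const_mul _
    rw [Finset.sum_congr rfl h1]
    simp only [dotProduct, mulVec, Finset.mul_sum]
    exact Finset.sum_congr rfl fun k _ => Finset.sum_congr rfl fun l _ => by ring
  · intro k _
    exact integrable_finset_sum _ fun l _ => (hint k l).const_mul _

/-- Mean squared prediction error of the best linear (orthogonal / L²) prediction of a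
linear functional `Y = uᵀ X_M` of a centered Gaussian vector given the coordinates
`X_A`, expressed through the inverse of the precision-matrix block:
`E[(P_A Y − Y)²] = uᵀ (Λ_M)⁻¹ u` where `Λ = Γ⁻¹`. -/
theorem prediction_error_eq_inv_precision_block {a m : ℕ}
    {Ω : Type*} [MeasurableSpace Ω] (ℙ : Measure Ω) [IsProbabilityMeasure ℙ]
    (X : (Fin a ⊕ Fin m) → Ω → ℝ)
    (hmeas : ∀ i, Measurable (X i))
    (hint : ∀ i j, Integrable (fun ω => X i ω * X j ω) ℙ)
    (Γ : Matrix (Fin a ⊕ Fin m) (Fin a ⊕ Fin m) ℝ)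
    (hΓ : Γ.PosDef)
    (hcentered : ∀ i, ∫ ω, X i ω ∂ℙ = 0)
    (hcov : ∀ i j, ∫ ω, X i ω * X j ω ∂ℙ = Γ i j)
    (u : Fin m → ℝ) :
    -- the orthogonal projection of `Y = uᵀ X_M` onto the span of `(X_i)_{i ∈ A}`
    -- has coefficient vector `v = Γ_A⁻¹ Γ_{AM} u`
    (∫ ω, ((∑ i, ((Γ.toBlocks₁₁)⁻¹ *ᵥ (Γ.toBlocks₁₂ *ᵥ u)) i * X (Sum.inl i) ω)
        - (∑ j, u j * X (Sum.inr j) ω)) ^ 2 ∂ℙ)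
      = u ⬝ᵥ ((Γ⁻¹.toBlocks₂₂)⁻¹ *ᵥ u) := by
  set A := Γ.toBlocks₁₁ with hA
  set B := Γ.toBlocks₁₂ with hB
  set C := Γ.toBlocks₂₁ with hC
  set D := Γ.toBlocks₂₂ with hD
  set v : Fin a → ℝ := A⁻¹ *ᵥ (B *ᵥ u) with hv
  set c : (Fin a ⊕ Fin m) → ℝ := Sum.elim v (fun j => -u j) with hc
  -- A is positive definite
  have hApd : A.PosDef := by
    refine Matrix.PosDef.of_dotProduct_mulVec_pos ?_ ?_
    · ext i j
      have := congrFun (congrFun hΓ.1 (Sum.inl j)) (Sum.inl i)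
      simpa [Matrix.conjTranspose_apply, hA, Matrix.toBlocks₁₁] using this.symm
    · intro x hx
      have hy : (Sum.elim x 0 : (Fin a ⊕ Fin m) → ℝ) ≠ 0 := by
        intro h
        apply hx
        ext i
        exact congrFun h (Sum.inl i)
      have := hΓ.dotProduct_mulVec_pos hy
      simpa [dotProduct, Fintype.sum_sum_type, Matrix.mulVec, hA,
        Matrix.toBlocks₁₁] using this
  haveI hAinv : Invertible A := invertibleOfIsUnitDet A hApd.det_pos.ne'.isUnit
  haveI hΓinv : Invertible Γ := invertibleOfIsUnitDet Γ hΓ.det_pos.ne'.isUnit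
  have hΓblocks : Γ = fromBlocks A B C D := (fromBlocks_toBlocks Γ).symm
  haveI hΓinv' : Invertible (fromBlocks A B C D) := hΓblocks ▸ hΓinv
  haveI hSinv : Invertible (D - C * ⅟A * B) :=
    invertibleOfFromBlocks₁₁Invertible A B C D
  -- identify the RHS matrix with the Schur complement
  have hblock : (Γ⁻¹.toBlocks₂₂)⁻¹ = D - C * A⁻¹ * B := by
    have h1 : Γ⁻¹ = ⅟(fromBlocks A B C D) := by
      rw [hΓblocks, ← invOf_eq_nonsing_inv]
    have h2 : (⅟(fromBlocks A B C D)).toBlocks₂₂ = (D - C * A⁻¹ * B)⁻¹ := by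
      rw [invOf_fromBlocks₁₁_eq, toBlocks_fromBlocks₂₂, invOf_eq_nonsing_inv,
        invOf_eq_nonsing_inv]
    haveI hS' : Invertible (D - C * A⁻¹ * B) := by
      have e : D - C * A⁻¹ * B = D - C * ⅟A * B := by rw [invOf_eq_nonsing_inv]
      rw [e]; exact hSinv
    rw [h1, h2, Matrix.nonsing_inv_nonsing_inv _ (isUnit_det_of_invertible _)]
  rw [hblock]
  -- compute the integral as a quadratic form
  have hsum : ∀ ω, ((∑ i, v i * X (Sum.inl i) ω) - (∑ j, u j * X (Sum.inr j) ω))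
      = ∑ k, c k * X k ω := by
    intro ω
    rw [Fintype.sum_sum_type]
    simp [hc, sub_eq_add_neg, Finset.sum_neg_distrib, neg_mul]
  simp_rw [hsum]
  rw [quad_form_integral ℙ X hint Γ hcov c]
  -- now pure linear algebra
  have hAv : A *ᵥ v = B *ᵥ u := by
    rw [hv, mulVec_mulVec, mul_nonsing_inv _ hApd.det_pos.ne'.isUnit, one_mulVec]
  rw [hΓblocks]
  have hmv : fromBlocks A B C D *ᵥ c = Sum.elim (A *ᵥ v + B *ᵥ (fun j => -u j))
      (C *ᵥ v + D *ᵥ (fun j => -u j)) := by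
    rw [hc, fromBlocks_mulVec, Sum.elim_comp_inl, Sum.elim_comp_inr]
  rw [hmv, hc]
  rw [sumElim_dotProduct_sumElim]
  have hBneg : B *ᵥ (fun j => -u j) = -(B *ᵥ u) := by
    ext i; simp [mulVec, dotProduct, Finset.sum_neg_distrib]
  have hDneg : D *ᵥ (fun j => -u j) = -(D *ᵥ u) := by
    ext i; simp [mulVec, dotProduct, Finset.sum_neg_distrib]
  rw [hBneg, hDneg, hAv]
  have hCv : C *ᵥ v = (C * A⁻¹ * B) *ᵥ u := by
    rw [hv, mulVec_mulVec, mulVec_mulVec, Matrix.mul_assoc]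
  rw [show (fun j : Fin m => -u j) = -u from rfl]
  simp only [dotProduct_add, add_dotProduct, dotProduct_neg, neg_dotProduct, dotProduct_neg,
    neg_neg, sub_mulVec, dotProduct_sub]
  rw [hCv]
  ring
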